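/- For any non-empty set Π of odd prime numbers, the function δ_Π : μ_∞^* → {±1} defined by δ_Π(ζ) = -1 if the order of ζ is divisible only by primes in Π, and δ_Π(ζ) = 1 otherwise, is a circular distribution: it is Galois-equivariant and satisfies ∏_{ζ^a = ε} δ_Π(ζ) = δ_Π(ε) for all a ∈ ℕ and all nontrivial roots of unity ε. -/

import Mathlib

open scoped Classical

/-- A fixed algebraic closure of `ℚ`. -/
notation "Qc" => AlgebraicClosure ℚ

noncomputable instance : DecidableEq Qc := Classical.decEq _

def Pnum (P : Set ℕ) (n : ℕ) : Prop := ∀ q : ℕ, q.Prime → q ∣ n → q ∈ P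

lemma Pnum.of_dvd {P : Set ℕ} {m n : ℕ} (h : Pnum P n) (hd : m ∣ n) : Pnum P m :=
  fun q hq hq2 => h q hq (hq2.trans hd)

lemma Pnum.mul {P : Set ℕ} {m n : ℕ} (hm : Pnum P m) (hn : Pnum P n) : Pnum P (m * n) :=
  fun q hq hd => ((Nat.Prime.dvd_mul hq).mp hd).elim (hm q hq) (hn q hq)

lemma orderOf_inv₀ (x : Qc) : orderOf x⁻¹ = orderOf x := by
  have h : ∀ y : Qc, orderOf y⁻¹ ∣ orderOf y := fun y =>
    orderOf_dvd_of_pow_eq_one (by rw [inv_pow, pow_orderOf_eq_one, inv_one])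
  exact dvd_antisymm (h x) (by simpa using h x⁻¹)

lemma Pnum.orderOf_mul {P : Set ℕ} {x y : Qc} (hx : Pnum P (orderOf x))
    (hy : Pnum P (orderOf y)) : Pnum P (orderOf (x * y)) :=
  (hx.mul hy).of_dvd ((Commute.all x y).orderOf_mul_dvd_mul_orderOf)

set_option maxHeartbeats 1000000 in
lemma prime_step (P : Set ℕ) (hP : ∀ q ∈ P, Nat.Prime q ∧ Odd q) (q : ℕ) (hq : q.Prime)
    (ε : Qc) (hfin : IsOfFinOrder ε) (hPn : Pnum P (orderOf ε)) :
    ∃ ζ : Qc, ζ ^ q = ε ∧ IsOfFinOrder ζ ∧ Pnum P (orderOf ζ) := by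
  have hd : 0 < orderOf ε := orderOf_pos_iff.mpr hfin
  by_cases hqP : q ∈ P
  · obtain ⟨y, hy⟩ := IsAlgClosed.exists_pow_nat_eq ε hq.pos
    have hfy : y ^ (q * orderOf ε) = 1 := by rw [pow_mul, hy, pow_orderOf_eq_one]
    have hyfin : IsOfFinOrder y :=
      isOfFinOrder_iff_pow_eq_one.mpr ⟨q * orderOf ε, Nat.mul_pos hq.pos hd, hfy⟩
    have hPq : Pnum P q := fun r hr hrq => ((Nat.prime_dvd_prime_iff_eq hr hq).mp hrq) ▸ hqP
    exact ⟨y, hy, hyfin, (hPq.mul hPn).of_dvd (orderOf_dvd_of_pow_eq_one hfy)⟩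
  · have hqd : ¬ q ∣ orderOf ε := fun h => hqP (hPn q hq h)
    have hco : Nat.Coprime q (orderOf ε) := (Nat.Prime.coprime_iff_not_dvd hq).mpr hqd
    have htot : 0 < Nat.totient (orderOf ε) := Nat.totient_pos.mpr hd
    refine ⟨ε ^ (q ^ (Nat.totient (orderOf ε) - 1)), ?_, hfin.pow, hPn.of_dvd (orderOf_pow_dvd _)⟩
    rw [← pow_mul, ← pow_succ, Nat.sub_add_cancel htot]
    obtain ⟨k, hk⟩ : ∃ k, q ^ Nat.totient (orderOf ε) = orderOf ε * k + 1 := by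
      have h1 : 1 ≤ q ^ Nat.totient (orderOf ε) := Nat.one_le_pow _ _ hq.pos
      obtain ⟨k, hk⟩ := (Nat.modEq_iff_dvd' h1).mp (Nat.ModEq.pow_totient hco).symm
      exact ⟨k, by omega⟩
    have h2 : ε ^ (orderOf ε * k) = 1 := by
      rw [pow_mul, pow_orderOf_eq_one, one_pow]
    rw [hk, pow_add, h2, pow_one, one_mul]

lemma exists_root_Pnum (P : Set ℕ) (hP : ∀ q ∈ P, Nat.Prime q ∧ Odd q) :
    ∀ a : ℕ, 0 < a → ∀ ε : Qc, IsOfFinOrder ε → Pnum P (orderOf ε) →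
      ∃ ζ : Qc, ζ ^ a = ε ∧ IsOfFinOrder ζ ∧ Pnum P (orderOf ζ) := by
  intro a
  induction a using Nat.strong_induction_on with
  | _ a ih =>
    intro ha ε hfin hPn
    rcases eq_or_lt_of_le (Nat.one_le_iff_ne_zero.mpr ha.ne') with h1 | h1
    · exact ⟨ε, by rw [← h1, pow_one], hfin, hPn⟩
    · have hqp : a.minFac.Prime := Nat.minFac_prime (by omega)
      have hab : a = a.minFac * (a / a.minFac) := (Nat.mul_div_cancel' a.minFac_dvd).symm
      have hb0 : 0 < a / a.minFac := Nat.div_pos (Nat.minFac_le ha) hqp.pos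
      have hblt : a / a.minFac < a := Nat.div_lt_self ha hqp.one_lt
      obtain ⟨y, hy, hyfin, hyP⟩ := ih _ hblt hb0 ε hfin hPn
      obtain ⟨ζ, hζ, hζfin, hζP⟩ := prime_step P hP a.minFac hqp y hyfin hyP
      exact ⟨ζ, by rw [hab, pow_mul, hζ, hy], hζfin, hζP⟩

/-- A circular distribution in the sense of Coleman: a Galois-equivariant function on the
set `μ_∞^*` of nontrivial roots of unity, with values in `Q^{c,×}`, satisfying
`∏_{ζ^a = ε} f(ζ) = f(ε)`.  (The function is given as a total function on `Qc`; all
conditions concern only nontrivial roots of unity.) -/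
structure CircularDist where
  toFun : Qc → Qc
  equivariant : ∀ (σ : Qc ≃ₐ[ℚ] Qc) (ζ : Qc) (n : ℕ), 0 < n → ζ ^ n = 1 → ζ ≠ 1 →
    toFun (σ ζ) = σ (toFun ζ)
  nonzero : ∀ (ζ : Qc) (n : ℕ), 0 < n → ζ ^ n = 1 → ζ ≠ 1 → toFun ζ ≠ 0
  distrib : ∀ (a : ℕ) (ε : Qc) (n : ℕ), 0 < a → 0 < n → ε ^ n = 1 → ε ≠ 1 →
    ∏ ζ ∈ (Polynomial.nthRoots a ε).toFinset, toFun ζ = toFun ε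


/-- The function `δ_Π` attached to a set `P` of odd primes: it takes the value `-1` at
roots of unity whose order is divisible only by primes belonging to `P`, and `1`
otherwise. -/
noncomputable def deltaFun (P : Set ℕ) : Qc → Qc := fun ζ =>
  if ∀ q : ℕ, q.Prime → q ∣ orderOf ζ → q ∈ P then -1 else 1


lemma deltaFun_eq_neg_one {P : Set ℕ} {ζ : Qc} (h : Pnum P (orderOf ζ)) :
    deltaFun P ζ = -1 := if_pos h

lemma deltaFun_eq_one {P : Set ℕ} {ζ : Qc} (h : ¬ Pnum P (orderOf ζ)) :
    deltaFun P ζ = 1 := if_neg h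

/-- for any non-empty set `P` of odd primes, the function `δ_Π` is a
circular distribution. -/
theorem statement3 (P : Set ℕ) (hne : P.Nonempty)
    (hP : ∀ q ∈ P, Nat.Prime q ∧ Odd q) :
    ∃ f : CircularDist, f.toFun = deltaFun P := by
  refine ⟨⟨deltaFun P, ?_, ?_, ?_⟩, rfl⟩
  · -- equivariant
    intro σ ζ n hn hpow hζ1
    have horder : orderOf (σ ζ) = orderOf ζ :=
      orderOf_injective σ.toAlgHom.toRingHom.toMonoidHom σ.injective ζ
    simp only [deltaFun, horder]
    split_ifs with h
    · rw [map_neg, map_one]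
    · rw [map_one]
  · -- nonzero
    intro ζ n hn hpow hζ1
    simp only [deltaFun]
    split_ifs with h
    · exact neg_ne_zero.mpr one_ne_zero
    · exact one_ne_zero
  · -- distrib
    intro a ε n ha hn hεn hε1
    have hεfin : IsOfFinOrder ε := isOfFinOrder_iff_pow_eq_one.mpr ⟨n, hn, hεn⟩
    have hε0 : ε ≠ 0 := by
      intro h; rw [h, zero_pow hn.ne'] at hεn; exact zero_ne_one hεn
    have hmem : ∀ ζ : Qc, ζ ∈ (Polynomial.nthRoots a ε).toFinset ↔ ζ ^ a = ε := by
      intro ζ; rw [Multiset.mem_toFinset, Polynomial.mem_nthRoots ha]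
    have hkey : ∀ ζ : Qc, ζ ^ a = ε → IsOfFinOrder ζ ∧ orderOf ε ∣ orderOf ζ ∧ ζ ≠ 0 := by
      intro ζ hζ
      have h1 : ζ ^ (a * n) = 1 := by rw [pow_mul, hζ, hεn]
      refine ⟨isOfFinOrder_iff_pow_eq_one.mpr ⟨a * n, Nat.mul_pos ha hn, h1⟩, ?_, ?_⟩
      · have h2 := orderOf_pow_dvd (x := ζ) a
        rw [hζ] at h2; exact h2
      · intro h0; rw [h0, zero_pow ha.ne'] at hζ; exact hε0 hζ.symm
    by_cases hPm : ∀ q : ℕ, q.Prime → q ∣ orderOf ε → q ∈ P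
    · -- Pnum case
      obtain ⟨ζ₀, hζ₀a, hζ₀fin, hζ₀P⟩ := exists_root_Pnum P hP a ha ε hεfin hPm
      obtain ⟨-, -, hζ₀0⟩ := hkey ζ₀ hζ₀a
      have hζ₀T : ζ₀ ∈ (Polynomial.nthRoots a ε).toFinset := (hmem ζ₀).mpr hζ₀a
      have h2P : (2 : ℕ) ∉ P := by
        intro h
        have h2 := (hP 2 h).2
        rw [Nat.odd_iff] at h2
        omega
      have hδζ₀ : deltaFun P ζ₀ = -1 := deltaFun_eq_neg_one hζ₀P
      have hδε : deltaFun P ε = -1 := deltaFun_eq_neg_one hPm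
      rw [← Finset.mul_prod_erase _ _ hζ₀T, hδζ₀, hδε]
      have hPsq : Pnum P (orderOf (ζ₀ ^ 2)) := hζ₀P.of_dvd (orderOf_pow_dvd 2)
      have herase :
          ∏ ζ ∈ ((Polynomial.nthRoots a ε).toFinset.erase ζ₀), deltaFun P ζ = 1 := by
        refine Finset.prod_involution (fun ζ _ => ζ₀ ^ 2 * ζ⁻¹) ?_ ?_ ?_ ?_
        · -- f a * f (g a) = 1
          intro ζ hζ
          obtain ⟨hζT, -⟩ := Finset.mem_erase.mp hζ |>.symm
          obtain ⟨-, -, hζ0⟩ := hkey ζ ((hmem ζ).mp (Finset.mem_of_mem_erase hζ))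
          have hfwd : Pnum P (orderOf ζ) → Pnum P (orderOf (ζ₀ ^ 2 * ζ⁻¹)) := by
            intro h
            exact Pnum.orderOf_mul hPsq (by rw [orderOf_inv₀]; exact h)
          have hbwd : Pnum P (orderOf (ζ₀ ^ 2 * ζ⁻¹)) → Pnum P (orderOf ζ) := by
            intro h
            have hrec : ζ = ζ₀ ^ 2 * (ζ₀ ^ 2 * ζ⁻¹)⁻¹ := by
              field_simp
            rw [hrec]
            exact Pnum.orderOf_mul hPsq (by rw [orderOf_inv₀]; exact h)
          by_cases hc : Pnum P (orderOf ζ)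
          · rw [deltaFun_eq_neg_one hc, deltaFun_eq_neg_one (hfwd hc)]; ring
          · rw [deltaFun_eq_one hc, deltaFun_eq_one (fun h => hc (hbwd h))]; ring
        · -- f a ≠ 1 → g a ≠ a
          intro ζ hζ hδ h
          have hζne : ζ ≠ ζ₀ := (Finset.mem_erase.mp hζ).1
          obtain ⟨-, -, hζ0⟩ := hkey ζ ((hmem ζ).mp (Finset.mem_of_mem_erase hζ))
          have hPζ : Pnum P (orderOf ζ) := by
            by_contra hc
            exact hδ (deltaFun_eq_one hc)
          -- from h : ζ₀ ^ 2 * ζ⁻¹ = ζ, get (ζ * ζ₀⁻¹) * (ζ * ζ₀⁻¹) = 1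
          have hu : (ζ * ζ₀⁻¹) * (ζ * ζ₀⁻¹) = 1 := by
            field_simp at h ⊢
            rw [← h]
          rcases mul_self_eq_one_iff.mp hu with h1 | h1
          · apply hζne
            have : ζ = ζ₀ := by
              field_simp at h1
              exact h1
            exact this
          · have hPu : Pnum P (orderOf (ζ * ζ₀⁻¹)) :=
              Pnum.orderOf_mul hPζ (by rw [orderOf_inv₀]; exact hζ₀P)
            rw [h1] at hPu
            have h2 : orderOf (-1 : Qc) = 2 := by
              rw [orderOf_neg_one, if_neg (by rw [ringChar.eq_zero]; norm_num)]
            rw [h2] at hPu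
            exact h2P (hPu 2 Nat.prime_two dvd_rfl)
        · -- g a ∈ s
          intro ζ hζ
          have hζne : ζ ≠ ζ₀ := (Finset.mem_erase.mp hζ).1
          have hζa : ζ ^ a = ε := (hmem ζ).mp (Finset.mem_of_mem_erase hζ)
          obtain ⟨-, -, hζ0⟩ := hkey ζ hζa
          refine Finset.mem_erase.mpr ⟨?_, (hmem _).mpr ?_⟩
          · intro h
            apply hζne
            have h' : ζ₀ ^ 2 = ζ₀ * ζ := by
              field_simp at h
              rw [h, sq]
            rw [sq] at h'
            exact (mul_left_cancel₀ hζ₀0 h').symm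
          · rw [mul_pow, inv_pow, ← pow_mul, mul_comm 2 a, pow_mul, hζ₀a, hζa]
            rw [sq, mul_assoc, mul_inv_cancel₀ hε0, mul_one]
        · -- involutive
          intro ζ hζ
          obtain ⟨-, -, hζ0⟩ := hkey ζ ((hmem ζ).mp (Finset.mem_of_mem_erase hζ))
          field_simp
      rw [herase, mul_one]
    · -- not Pnum case
      have hall : ∀ ζ ∈ (Polynomial.nthRoots a ε).toFinset, deltaFun P ζ = 1 := by
        intro ζ hζ
        obtain ⟨hfin, hdvd, -⟩ := hkey ζ ((hmem ζ).mp hζ)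
        exact deltaFun_eq_one (fun hPζ => hPm (Pnum.of_dvd hPζ hdvd))
      rw [Finset.prod_eq_one hall, deltaFun_eq_one hPm]
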